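/- arXiv:1411.2003 — 2 statements merged into one kernel-verified Lean document; each statement's English description precedes it below -/
import Mathlib

section
/- For all positive integers N ≥ 2 and k with 1 ≤ k ≤ N−1, the inequality ψ(N) − ψ(k) − 1/k ≤ log(N−1) + (k−1)/k holds. -/
open Real MeasureTheory Set

noncomputable def digamma (x : ℝ) : ℝ := deriv (fun y => Real.log (Real.Gamma y)) x

lemma diffAt_logGamma {x : ℝ} (hx : 0 < x) :
    DifferentiableAt ℝ (fun y => Real.log (Real.Gamma y)) x := by
  have h1 : DifferentiableAt ℝ Real.Gamma x := by
    apply Real.differentiableAt_Gamma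
    intro m
    have : (0:ℝ) ≤ m := Nat.cast_nonneg m
    nlinarith
  exact h1.log (Real.Gamma_pos_of_pos hx).ne'

lemma digamma_add_one {x : ℝ} (hx : 0 < x) :
    digamma (x + 1) = digamma x + 1 / x := by
  have hx1 : (0:ℝ) < x + 1 := by linarith
  have hf : HasDerivAt (fun y => Real.log (Real.Gamma y)) (digamma x) x :=
    (diffAt_logGamma hx).hasDerivAt
  have hg : HasDerivAt (fun y => Real.log y + Real.log (Real.Gamma y))
      (1 / x + digamma x) x := by
    simpa [one_div, Pi.add_def] using (Real.hasDerivAt_log hx.ne').add hf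
  have heq : (fun y : ℝ => Real.log (Real.Gamma (y + 1)))
      =ᶠ[nhds x] (fun y => Real.log y + Real.log (Real.Gamma y)) := by
    filter_upwards [eventually_gt_nhds hx] with y hy
    rw [Real.Gamma_add_one hy.ne', Real.log_mul hy.ne' (Real.Gamma_pos_of_pos hy).ne']
  have h1 : HasDerivAt (fun y : ℝ => Real.log (Real.Gamma (y + 1))) (1 / x + digamma x) x :=
    hg.congr_of_eventuallyEq heq
  have h2 : HasDerivAt (fun y : ℝ => Real.log (Real.Gamma (y + 1)))
      (digamma (x + 1) * 1) x := by
    exact ((diffAt_logGamma hx1).hasDerivAt).comp x ((hasDerivAt_id x).add_const 1)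
  have := h1.unique h2
  rw [mul_one] at this
  linarith

lemma digamma_nat_sum (k : ℕ) (hk : 1 ≤ k) :
    ∀ N, k ≤ N → digamma N = digamma k + ∑ j ∈ Finset.Ico k N, 1 / (j : ℝ) := by
  refine Nat.le_induction ?_ ?_
  · simp
  · intro N hkN ih
    have hN0 : (0:ℝ) < N := by
      have : 1 ≤ N := le_trans hk hkN
      exact_mod_cast Nat.lt_of_lt_of_le Nat.zero_lt_one this
    have h1 : digamma ((N:ℝ) + 1) = digamma N + 1 / N := digamma_add_one hN0
    rw [Finset.sum_Ico_succ_top hkN]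
    push_cast
    rw [h1, ih]
    ring

lemma sum_inv_le (k : ℕ) (hk : 1 ≤ k) :
    ∀ N, k + 1 ≤ N →
      ∑ j ∈ Finset.Ico (k+1) N, 1 / (j : ℝ) ≤ Real.log ((N:ℝ) - 1) - Real.log k := by
  refine Nat.le_induction ?_ ?_
  · simp
  · intro N hkN ih
    rw [Finset.sum_Ico_succ_top hkN]
    have hN2 : 2 ≤ N := le_trans (by omega) hkN
    have hN1 : (1:ℝ) ≤ (N:ℝ) - 1 := by
      have : (2:ℝ) ≤ N := by exact_mod_cast hN2
      linarith
    have hNpos : (0:ℝ) < N := by linarith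
    have key : 1 / (N:ℝ) ≤ Real.log N - Real.log ((N:ℝ) - 1) := by
      have h := Real.log_le_sub_one_of_pos (show (0:ℝ) < ((N:ℝ)-1)/N by positivity)
      rw [Real.log_div (by linarith) hNpos.ne'] at h
      have : ((N:ℝ)-1)/N - 1 = -(1/N) := by field_simp; ring
      linarith [h.trans_eq this]
    push_cast
    have : (↑N + 1 - 1 : ℝ) = (N:ℝ) := by ring
    rw [this]
    linarith

theorem digamma_ineq (N k : ℕ) (hN : 2 ≤ N) (hk : 1 ≤ k) (hkN : k ≤ N - 1) :
    digamma N - digamma k - 1 / (k : ℝ) ≤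
      Real.log ((N : ℝ) - 1) + ((k : ℝ) - 1) / (k : ℝ) := by
  have hkN' : k + 1 ≤ N := by omega
  have hsum := digamma_nat_sum k hk N (by omega)
  rw [Finset.sum_eq_sum_Ico_succ_bot (by omega : k < N)] at hsum
  have hbound := sum_inv_le k hk N hkN'
  have hlogk : 0 ≤ Real.log k := Real.log_natCast_nonneg k
  have hkpos : (0:ℝ) < k := by exact_mod_cast hk
  have hfrac : 0 ≤ ((k:ℝ) - 1) / k := by
    apply div_nonneg _ hkpos.le
    have : (1:ℝ) ≤ k := by exact_mod_cast hk
    linarith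
  rw [hsum]
  linarith
end

section
/- For x > 0, the Gamma function satisfies Γ(x+1) < √(2π) · ((x + 1/2)/e)^{x + 1/2}. -/
open Real Filter Set Nat Topology

lemma lemA {t : ℝ} (ht0 : 0 < t) (ht1 : t < 1) :
    (1+t)*Real.log (1+t) - (1-t)*Real.log (1-t) < 2*t := by
  set f : ℝ → ℝ := fun s => 2*s - ((1+s)*Real.log (1+s) - (1-s)*Real.log (1-s)) with hf
  have key : StrictMonoOn f (Set.Ico (0:ℝ) 1) := by
    have hderiv : ∀ s ∈ Set.Ioo (0:ℝ) 1, HasDerivAt f (-Real.log ((1+s)*(1-s))) s := by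
      intro s hs
      have h1 : (0:ℝ) < 1 + s := by linarith [hs.1]
      have h2 : (0:ℝ) < 1 - s := by linarith [hs.2]
      have hu : HasDerivAt (fun y : ℝ => 1 + y) 1 s := (hasDerivAt_id s).const_add 1
      have hv : HasDerivAt (fun y : ℝ => 1 - y) (-1) s := (hasDerivAt_id s).const_sub 1
      have hlu : HasDerivAt (fun y : ℝ => Real.log (1 + y)) (1/(1+s)) s := by
        simpa using hu.log h1.ne'
      have hlv : HasDerivAt (fun y : ℝ => Real.log (1 - y)) (-1/(1-s)) s := by
        simpa using hv.log h2.ne'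
      have hA : HasDerivAt (fun y : ℝ => (1+y)*Real.log (1+y))
          (1 * Real.log (1+s) + (1+s) * (1/(1+s))) s := hu.mul hlu
      have hB : HasDerivAt (fun y : ℝ => (1-y)*Real.log (1-y))
          ((-1) * Real.log (1-s) + (1-s) * (-1/(1-s))) s := hv.mul hlv
      have hid : HasDerivAt (fun y : ℝ => 2*y) 2 s := by
        simpa using (hasDerivAt_id s).const_mul 2
      have := hid.sub (hA.sub hB)
      refine this.congr_deriv ?_
      rw [Real.log_mul h1.ne' h2.ne']
      field_simp
      ring
    have hcont : ContinuousOn f (Set.Ico (0:ℝ) 1) := by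
      intro s hs
      have h1 : (0:ℝ) < 1 + s := by linarith [hs.1]
      have h2 : (0:ℝ) < 1 - s := by linarith [hs.2]
      apply ContinuousWithinAt.sub
      · exact (continuous_const.mul continuous_id).continuousWithinAt
      · apply ContinuousWithinAt.sub
        · exact (((continuous_const.add continuous_id).continuousAt).mul
            ((Real.continuousAt_log h1.ne').comp ((continuous_const.add continuous_id).continuousAt))).continuousWithinAt
        · exact (((continuous_const.sub continuous_id).continuousAt).mul
            ((Real.continuousAt_log h2.ne').comp ((continuous_const.sub continuous_id).continuousAt))).continuousWithinAt
    apply strictMonoOn_of_deriv_pos (convex_Ico 0 1) hcont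
    intro s hs
    rw [interior_Ico] at hs
    rw [(hderiv s hs).deriv]
    have h1 : (0:ℝ) < (1+s)*(1-s) := by nlinarith [hs.1, hs.2]
    have h2 : (1+s)*(1-s) < 1 := by nlinarith [hs.1, hs.2]
    have := Real.log_neg h1 h2
    linarith
  have h0 : (0:ℝ) ∈ Set.Ico (0:ℝ) 1 := by constructor <;> norm_num
  have ht : t ∈ Set.Ico (0:ℝ) 1 := ⟨ht0.le, ht1⟩
  have := key h0 ht ht0
  simp only [hf] at this
  norm_num at this
  linarith

lemma lemB {y : ℝ} (hy : 0 < y) :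
    (y+3/2) * Real.log (y+3/2) - (y+3/2) <
      Real.log (y+1) + ((y+1/2) * Real.log (y+1/2) - (y+1/2)) := by
  set a : ℝ := y + 1 with ha
  have ha1 : (1:ℝ) < a := by simp [ha]; linarith
  have ha0 : (0:ℝ) < a := by linarith
  set t : ℝ := 1/(2*a) with ht
  have ht0 : 0 < t := by positivity
  have ht1 : t < 1 := by
    rw [ht, div_lt_one (by linarith)]
    linarith
  have key := lemA ht0 ht1
  have h1t : 1 + t = (a + 1/2)/a := by rw [ht]; field_simp
  have h2t : 1 - t = (a - 1/2)/a := by rw [ht]; field_simp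
  have hap : (0:ℝ) < a + 1/2 := by linarith
  have ham : (0:ℝ) < a - 1/2 := by linarith
  rw [h1t, h2t, Real.log_div hap.ne' ha0.ne', Real.log_div ham.ne' ha0.ne'] at key
  -- multiply key by a
  have key2 : a * ((a + 1/2)/a * (Real.log (a+1/2) - Real.log a)
      - (a - 1/2)/a * (Real.log (a-1/2) - Real.log a)) < a * (2*t) := by
    exact (mul_lt_mul_iff_right₀ ha0).mpr key
  have hat : a * (2*t) = 1 := by rw [ht]; field_simp
  rw [hat] at key2
  have hexp : a * ((a + 1/2)/a * (Real.log (a+1/2) - Real.log a)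
      - (a - 1/2)/a * (Real.log (a-1/2) - Real.log a))
      = (a+1/2) * Real.log (a+1/2) - (a-1/2) * Real.log (a-1/2) - Real.log a := by
    field_simp
    ring
  rw [hexp] at key2
  have e1 : a + 1/2 = y + 3/2 := by rw [ha]; ring
  have e2 : a - 1/2 = y + 1/2 := by rw [ha]; ring
  rw [e1, e2] at key2
  have : Real.log a = Real.log (y+1) := by rw [ha]
  linarith [key2, this.symm.le]

lemma lemC (m : ℕ) (θ : ℝ) (hθ0 : 0 ≤ θ) (hθ1 : θ < 1) :
    Real.log (Real.Gamma ((m:ℝ) + 1 + θ)) ≤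
      Real.log (m ! : ℝ) + θ * Real.log ((m:ℝ) + 1) := by
  have h1 : ((m:ℝ) + 1) ∈ Set.Ioi (0:ℝ) := by
    simp; positivity
  have h2 : ((m:ℝ) + 2) ∈ Set.Ioi (0:ℝ) := by
    simp; positivity
  have hab : (1 - θ) + θ = 1 := by ring
  have hconv := Real.convexOn_log_Gamma.2 h1 h2 (by linarith) hθ0 hab
  simp only [smul_eq_mul, Function.comp_apply] at hconv
  have harg : (1 - θ) * ((m:ℝ) + 1) + θ * ((m:ℝ) + 2) = (m:ℝ) + 1 + θ := by ring
  rw [harg] at hconv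
  have hg1 : Real.Gamma ((m:ℝ) + 1) = (m ! : ℝ) := Real.Gamma_nat_eq_factorial m
  have hg2 : Real.Gamma ((m:ℝ) + 2) = ((m+1)! : ℝ) := by
    have := Real.Gamma_nat_eq_factorial (m+1)
    push_cast at this ⊢
    convert this using 2
    ring
  rw [hg1, hg2] at hconv
  have hfac : Real.log (((m+1)! : ℝ)) = Real.log ((m:ℝ)+1) + Real.log (m ! : ℝ) := by
    rw [Nat.factorial_succ]
    push_cast
    rw [Real.log_mul (by positivity) (by positivity)]
  rw [hfac] at hconv
  calc Real.log (Real.Gamma ((m:ℝ) + 1 + θ))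
      ≤ (1-θ) * Real.log (m ! : ℝ) + θ * (Real.log ((m:ℝ)+1) + Real.log (m ! : ℝ)) := hconv
    _ = Real.log (m ! : ℝ) + θ * Real.log ((m:ℝ) + 1) := by ring

lemma lemD (θ : ℝ) (hθ0 : 0 ≤ θ) (hθ1 : θ < 1) :
    Tendsto (fun m : ℕ => Real.log (m ! : ℝ) + θ * Real.log ((m:ℝ)+1)
        - (((m:ℝ)+θ+1/2) * Real.log ((m:ℝ)+θ+1/2) - ((m:ℝ)+θ+1/2)))
      atTop (𝓝 (Real.log (Real.sqrt (2*Real.pi)))) := by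
  set c : ℝ := θ + 1/2 with hc
  have hc0 : 0 < c := by rw [hc]; linarith
  set g : ℕ → ℝ := fun m => Real.log (Stirling.stirlingSeq m) + (1/2)*Real.log 2
    + θ*(Real.log ((m:ℝ)+1) - Real.log m) + (c - ((m:ℝ)+c)*Real.log (1+c/m)) with hg
  have t1 : Tendsto (fun m : ℕ => Real.log (Stirling.stirlingSeq m)) atTop
      (𝓝 (Real.log (Real.sqrt Real.pi))) :=
    ((Real.continuousAt_log (Real.sqrt_pos.mpr Real.pi_pos).ne').tendsto).comp
      Stirling.tendsto_stirlingSeq_sqrt_pi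
  have t2 : Tendsto (fun m : ℕ => Real.log ((m:ℝ)+1) - Real.log m) atTop (𝓝 0) := by
    have h1 : Tendsto (fun m : ℕ => 1 + 1/(m:ℝ)) atTop (𝓝 1) := by
      simpa using (tendsto_const_nhds (x := (1:ℝ))).add (tendsto_one_div_atTop_nhds_zero_nat)
    have h2 : Tendsto (fun m : ℕ => Real.log (1 + 1/(m:ℝ))) atTop (𝓝 0) := by
      have := (Real.continuousAt_log one_ne_zero).tendsto.comp h1
      simpa [Function.comp_def] using this
    refine h2.congr' ?_
    filter_upwards [eventually_ge_atTop 1] with m hm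
    have hm0 : (0:ℝ) < m := by exact_mod_cast hm
    rw [← Real.log_div (by positivity) hm0.ne']
    congr 1
    field_simp
  have tlog0 : Tendsto (fun m : ℕ => Real.log (1 + c/(m:ℝ))) atTop (𝓝 0) := by
    have h1 : Tendsto (fun m : ℕ => 1 + c/(m:ℝ)) atTop (𝓝 1) := by
      simpa using tendsto_const_nhds.add
        (Tendsto.div_atTop (tendsto_const_nhds (x := c)) tendsto_natCast_atTop_atTop)
    have := (Real.continuousAt_log one_ne_zero).tendsto.comp h1
    simpa [Function.comp_def] using this
  have t3 : Tendsto (fun m : ℕ => ((m:ℝ)+c) * Real.log (1 + c/(m:ℝ))) atTop (𝓝 c) := by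
    have hfirst : Tendsto (fun m : ℕ => (m:ℝ) * Real.log (1 + c/(m:ℝ))) atTop (𝓝 c) := by
      have := (Real.tendsto_mul_log_one_add_div_atTop c).comp tendsto_natCast_atTop_atTop
      simpa [Function.comp_def] using this
    have hsecond : Tendsto (fun m : ℕ => c * Real.log (1 + c/(m:ℝ))) atTop (𝓝 0) := by
      simpa using tlog0.const_mul c
    have := hfirst.add hsecond
    simp only [add_zero] at this
    refine this.congr ?_
    intro m; ring
  have tg : Tendsto g atTop (𝓝 (Real.log (Real.sqrt (2*Real.pi)))) := by
    have this1 : Tendsto (fun m : ℕ => Real.log (Stirling.stirlingSeq m) + (1/2)*Real.log 2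
        + θ*(Real.log ((m:ℝ)+1) - Real.log m) + (c - ((m:ℝ)+c)*Real.log (1+c/(m:ℝ)))) atTop
        (𝓝 (Real.log (Real.sqrt Real.pi) + (1/2)*Real.log 2 + θ * 0 + (c - c))) :=
      ((t1.add tendsto_const_nhds).add (t2.const_mul θ)).add (tendsto_const_nhds.sub t3)
    have hval : Real.log (Real.sqrt Real.pi) + (1/2)*Real.log 2 + θ * 0 + (c - c)
        = Real.log (Real.sqrt (2*Real.pi)) := by
      rw [Real.log_sqrt Real.pi_pos.le, Real.log_sqrt (by positivity),
        Real.log_mul (by norm_num) Real.pi_pos.ne']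
      ring
    rw [hval] at this1
    exact this1
  refine tg.congr' ?_
  filter_upwards [eventually_ge_atTop 1] with m hm
  have hm0 : (0:ℝ) < m := by exact_mod_cast hm
  -- decompose log m!
  have hSpos : 0 < Stirling.stirlingSeq m := by
    obtain ⟨k, rfl⟩ := Nat.exists_eq_succ_of_ne_zero (by omega : m ≠ 0)
    exact Stirling.stirlingSeq'_pos k
  have hden : (0:ℝ) < Real.sqrt (2*(m:ℝ)) * ((m:ℝ)/Real.exp 1)^(m:ℕ) := by positivity
  have hfac : (m ! : ℝ) = Stirling.stirlingSeq m * (Real.sqrt (2*(m:ℝ)) * ((m:ℝ)/Real.exp 1)^(m:ℕ)) := by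
    rw [Stirling.stirlingSeq, div_mul_cancel₀]
    exact hden.ne'
  have hlogfac : Real.log (m ! : ℝ) = Real.log (Stirling.stirlingSeq m)
      + ((1/2)*(Real.log 2 + Real.log m) + (m:ℝ)*(Real.log m - 1)) := by
    rw [hfac, Real.log_mul hSpos.ne' hden.ne',
      Real.log_mul (Real.sqrt_pos.mpr (by positivity)).ne' (by positivity),
      Real.log_sqrt (by positivity), Real.log_mul (by norm_num) hm0.ne',
      Real.log_pow, Real.log_div hm0.ne' (Real.exp_pos 1).ne', Real.log_exp]
    ring
  have hlogmc : Real.log ((m:ℝ)+c) = Real.log m + Real.log (1 + c/(m:ℝ)) := by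
    have h : (m:ℝ)+c = (m:ℝ) * (1 + c/(m:ℝ)) := by
      field_simp
    rw [h, Real.log_mul hm0.ne' (by positivity)]
  have hmc : (m:ℝ)+θ+1/2 = (m:ℝ)+c := by rw [hc]; ring
  rw [hlogfac, hmc, hlogmc]
  simp only [hg]
  ring

theorem gamma_upper_bound (x : ℝ) (hx : 0 < x) :
    Real.Gamma (x + 1) <
      Real.sqrt (2 * Real.pi) * ((x + 1 / 2) / Real.exp 1) ^ (x + 1 / 2) := by
  set s : ℕ → ℝ := fun n => Real.log (Real.Gamma (x + n + 1))
    - ((x + (n:ℝ) + 1/2) * Real.log (x + (n:ℝ) + 1/2) - (x + (n:ℝ) + 1/2)) with hs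
  have hGpos : ∀ n : ℕ, 0 < Real.Gamma (x + (n:ℝ) + 1) := by
    intro n
    apply Real.Gamma_pos_of_pos
    positivity
  have sstep : ∀ n : ℕ, s n < s (n+1) := by
    intro n
    set y : ℝ := x + n with hy
    have hy0 : 0 < y := by positivity
    have hB := lemB hy0
    have hΓ : Real.Gamma (x + ((n:ℝ)+1) + 1) = (y+1) * Real.Gamma (x + n + 1) := by
      have h1 : x + ((n:ℝ)+1) + 1 = (x + n + 1) + 1 := by ring
      rw [h1, Real.Gamma_add_one (by positivity)]
      try (congr 1; rw [hy]; ring)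
    have hlogΓ : Real.log (Real.Gamma (x + ((n:ℝ)+1) + 1))
        = Real.log (y+1) + Real.log (Real.Gamma (x + n + 1)) := by
      rw [hΓ, Real.log_mul (by positivity) (hGpos n).ne']
    simp only [hs]
    push_cast
    rw [hlogΓ]
    have e1 : x + ((n:ℝ)+1) + 1/2 = y + 3/2 := by rw [hy]; try ring
    have e2 : x + (n:ℝ) + 1/2 = y + 1/2 := by rw [hy]; try ring
    rw [e1, e2]
    linarith
  have smono : StrictMono s := strictMono_nat_of_lt_succ sstep
  set k : ℕ := ⌊x⌋₊ with hk
  set θ : ℝ := x - k with hθ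
  have hθ0 : 0 ≤ θ := by
    have := Nat.floor_le hx.le
    simp only [hθ]; linarith
  have hθ1 : θ < 1 := by
    have := Nat.lt_floor_add_one x
    simp only [hθ]; linarith
  have hbound : ∀ n : ℕ, 1 ≤ n → s n ≤ Real.log ((n+k) ! : ℝ) + θ * Real.log ((((n+k):ℕ):ℝ)+1)
      - ((((n+k):ℕ):ℝ)+θ+1/2) * Real.log ((((n+k):ℕ):ℝ)+θ+1/2) + ((((n+k):ℕ):ℝ)+θ+1/2) := by
    intro n hn
    have harg : x + (n:ℝ) + 1 = (((n+k):ℕ):ℝ) + 1 + θ := by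
      push_cast
      rw [hθ]; ring
    have hC := lemC (n+k) θ hθ0 hθ1
    rw [← harg] at hC
    have harg2 : (((n+k):ℕ):ℝ) + θ + 1/2 = x + (n:ℝ) + 1/2 := by
      push_cast
      rw [hθ]; ring
    simp only [hs]
    rw [harg2]
    clear_value s k θ
    linarith
  have hlim : Filter.Tendsto (fun n : ℕ => Real.log (((n+k) !) : ℝ) + θ * Real.log ((((n+k):ℕ):ℝ)+1)
      - (((((n+k):ℕ):ℝ)+θ+1/2) * Real.log ((((n+k):ℕ):ℝ)+θ+1/2) - ((((n+k):ℕ):ℝ)+θ+1/2)))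
      atTop (𝓝 (Real.log (Real.sqrt (2*Real.pi)))) :=
    (lemD θ hθ0 hθ1).comp (tendsto_add_atTop_nat k)
  have hs1 : s 1 ≤ Real.log (Real.sqrt (2*Real.pi)) := by
    refine ge_of_tendsto hlim ?_
    filter_upwards [eventually_ge_atTop 1] with n hn
    have := hbound n hn
    have hmono := smono.le_iff_le.mpr hn
    calc s 1 ≤ s n := smono.monotone hn
      _ ≤ _ := by linarith [hbound n hn]
  have hs0 : s 0 < Real.log (Real.sqrt (2*Real.pi)) := lt_of_lt_of_le (sstep 0) hs1
  -- unfold s 0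
  have hx2 : (0:ℝ) < x + 1/2 := by linarith
  have hs0' : Real.log (Real.Gamma (x+1)) <
      Real.log (Real.sqrt (2*Real.pi)) + ((x+1/2) * Real.log (x+1/2) - (x+1/2)) := by
    simp only [hs, Nat.cast_zero, add_zero] at hs0
    linarith
  have hF : Real.log (Real.sqrt (2*Real.pi) * ((x + 1/2) / Real.exp 1) ^ (x + 1/2))
      = Real.log (Real.sqrt (2*Real.pi)) + ((x+1/2) * Real.log (x+1/2) - (x+1/2)) := by
    rw [Real.log_mul (by positivity) (by positivity), Real.log_rpow (by positivity),
      Real.log_div hx2.ne' (Real.exp_pos 1).ne', Real.log_exp]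
    ring
  rw [← hF] at hs0'
  have hΓ0 : 0 < Real.Gamma (x+1) := Real.Gamma_pos_of_pos (by linarith)
  have hF0 : 0 < Real.sqrt (2*Real.pi) * ((x + 1/2) / Real.exp 1) ^ (x + 1/2) := by positivity
  calc Real.Gamma (x+1) = Real.exp (Real.log (Real.Gamma (x+1))) := (Real.exp_log hΓ0).symm
    _ < Real.exp (Real.log (Real.sqrt (2*Real.pi) * ((x + 1/2) / Real.exp 1) ^ (x + 1/2))) :=
        Real.exp_lt_exp.mpr hs0'
    _ = _ := Real.exp_log hF0
end
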